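/- Let g : [0,∞) → [0,∞) be increasing, α-Lipschitz, with g(0)=0, and define ξ(u,v) = g(u) − g(v) for 0 ≤ v ≤ u. Then ξ belongs to 𝓑(α). Moreover, if b ≥ 0 satisfies g(b) = 0, and β ∈ 𝓑(α) satisfies β(u,b) − β(v,b) ≥ g(u) − g(v) for all b ≤ v ≤ u, then β(u,v) ≥ ξ(u,v) for all (u,v) ∈ Δ. -/
import Mathlib


open Set Filter

/-- The space `𝓑`: functions on `Δ = {(u,v) : 0 ≤ v ≤ u}` with `ψ(u,u)=0`, nonnegative,
subadditive, increasing in the first variable and decreasing in the second. -/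
def MemB (ψ : ℝ → ℝ → ℝ) : Prop :=
  (∀ u, 0 ≤ u → ψ u u = 0) ∧
  (∀ u v, 0 ≤ v → v ≤ u → 0 ≤ ψ u v) ∧
  (∀ u w v, 0 ≤ v → v ≤ w → w ≤ u → ψ u v ≤ ψ u w + ψ w v) ∧
  (∀ u w v, 0 ≤ v → v ≤ w → w ≤ u → ψ w v ≤ ψ u v) ∧
  (∀ u w v, 0 ≤ v → v ≤ w → w ≤ u → ψ u w ≤ ψ u v)

/-- The space `𝓑(α)`: members of `𝓑` which are `α`-Lipschitz for the `L¹` metric on `Δ`. -/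
def MemBLip (α : ℝ) (ψ : ℝ → ℝ → ℝ) : Prop :=
  MemB ψ ∧ ∀ u v u' v', 0 ≤ v → v ≤ u → 0 ≤ v' → v' ≤ u' →
    |ψ u v - ψ u' v'| ≤ α * (|u - u'| + |v - v'|)

/-- The space `𝓑̄_h(α)`: members of `𝓑(α)` which are increasing along diagonals and whose
restriction to the bottom edge grows at least at rate `h`. -/
def MemBbar (h α : ℝ) (ψ : ℝ → ℝ → ℝ) : Prop :=
  MemBLip α ψ ∧
  (∀ u v z, 0 ≤ v → v ≤ u → 0 ≤ z → ψ u v ≤ ψ (u + z) (v + z)) ∧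
  (∀ u v, 0 ≤ v → v ≤ u → h * (u - v) ≤ ψ u 0 - ψ v 0)

/-- The space `𝓖`: decreasing nonnegative functions on `[0,1]` vanishing at `1` with
`γ(λθ) ≤ γ(θ) + θγ(λ)`. -/
def MemG (γ : ℝ → ℝ) : Prop :=
  γ 1 = 0 ∧ (∀ θ, 0 ≤ θ → θ ≤ 1 → 0 ≤ γ θ) ∧
  (∀ a b, 0 ≤ a → a ≤ b → b ≤ 1 → γ b ≤ γ a) ∧
  (∀ l t, 0 ≤ l → l ≤ 1 → 0 ≤ t → t ≤ 1 → γ (l * t) ≤ γ t + t * γ l)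

/-- The space `𝓖(α)`: `α`-Lipschitz members of `𝓖`. -/
def MemGLip (α : ℝ) (γ : ℝ → ℝ) : Prop :=
  MemG γ ∧ ∀ a b, 0 ≤ a → a ≤ 1 → 0 ≤ b → b ≤ 1 → |γ a - γ b| ≤ α * |a - b|

/-- The space `𝓖̄_h(α)`: members of `𝓖(α)` with `γ(0) ≥ h` and `θ ↦ γ(θ)/(1-θ)` increasing. -/
def MemGbar (h α : ℝ) (γ : ℝ → ℝ) : Prop :=
  MemGLip α γ ∧ h ≤ γ 0 ∧
  ∀ a b, 0 ≤ a → a ≤ b → b < 1 → γ a / (1 - a) ≤ γ b / (1 - b)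

/-- The normalized limit `Γ(ψ)(θ) = limsup_{u→∞} ψ(u,θu)/u`. -/
noncomputable def Gam (ψ : ℝ → ℝ → ℝ) (θ : ℝ) : ℝ :=
  Filter.limsup (fun u => ψ u (θ * u) / u) Filter.atTop

/-- The projection `Φ_h(β)(u,v) = max_{0 ≤ z ≤ u}` of `β(u-z,v-z)` for `z ≤ v` and
`h(z-v) + β(u-z,0)` for `v ≤ z ≤ u`. -/
noncomputable def Phi (h : ℝ) (β : ℝ → ℝ → ℝ) (u v : ℝ) : ℝ :=
  sSup ((fun z => if z ≤ v then β (u - z) (v - z) else h * (z - v) + β (u - z) 0) ''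
    Set.Icc 0 u)

/-- The projection `Ω_h(γ)(θ) = (1-θ)·max{h, max_{0 ≤ λ ≤ θ} γ(λ)/(1-λ)}`. -/
noncomputable def Om (h : ℝ) (γ : ℝ → ℝ) (θ : ℝ) : ℝ :=
  (1 - θ) * max h (sSup ((fun l => γ l / (1 - l)) '' Set.Icc 0 θ))

/-- The space `𝓒(α)`: increasing `α`-Lipschitz functions `g : [0,∞) → [0,∞)` with `g(0)=0`. -/
def MemC (α : ℝ) (g : ℝ → ℝ) : Prop :=
  g 0 = 0 ∧ (∀ u, 0 ≤ u → 0 ≤ g u) ∧ (∀ a b, 0 ≤ a → a ≤ b → g a ≤ g b) ∧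
  (∀ a b, 0 ≤ a → 0 ≤ b → |g a - g b| ≤ α * |a - b|)

/-- The minimal extension `ξ(u,v) = g(u) - g(v)` of `g ∈ 𝓒(α)` lies in `𝓑(α)`; moreover if
`g(b) = 0` and `β ∈ 𝓑(α)` satisfies `β(u,b) - β(v,b) ≥ g(u) - g(v)` for all `b ≤ v ≤ u`,
then `β ≥ ξ` on `Δ`. -/
theorem minimal_extension (α : ℝ) (hα : 0 ≤ α) (g : ℝ → ℝ) (hg : MemC α g) :
    MemBLip α (fun u v => g u - g v) ∧
    ∀ b : ℝ, 0 ≤ b → g b = 0 → ∀ β : ℝ → ℝ → ℝ, MemBLip α β →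
      (∀ v u, b ≤ v → v ≤ u → g u - g v ≤ β u b - β v b) →
      ∀ u v, 0 ≤ v → v ≤ u → g u - g v ≤ β u v := by
  obtain ⟨hg0, hgnn, hgmono, hglip⟩ := hg
  constructor
  · refine ⟨⟨fun u _ => sub_self _, fun u v hv hvu => sub_nonneg.2 (hgmono v u hv hvu),
      fun u w v hv hvw hwu => by ring_nf; exact le_refl _,
      fun u w v hv hvw hwu => by dsimp only; have := hgmono w u (hv.trans hvw) hwu; linarith,
      fun u w v hv hvw hwu => by dsimp only; have := hgmono v w hv hvw; linarith⟩, ?_⟩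
    intro u v u' v' hv hvu hv' hv'u'
    have h1 := hglip u u' ((hv.trans hvu)) ((hv'.trans hv'u'))
    have h2 := hglip v v' hv hv'
    calc |g u - g v - (g u' - g v')| ≤ |g u - g u'| + |g v - g v'| := by
          rw [show g u - g v - (g u' - g v') = (g u - g u') - (g v - g v') by ring]
          exact abs_sub _ _
      _ ≤ α * |u - u'| + α * |v - v'| := add_le_add h1 h2
      _ = α * (|u - u'| + |v - v'|) := by ring
  · intro b hb hgb β hβ hyp u v hv hvu
    obtain ⟨⟨hβdiag, hβnn, hβsub, hβinc, hβdec⟩, hβlip⟩ := hβ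
    have gzero : ∀ x, 0 ≤ x → x ≤ b → g x = 0 := fun x hx hxb =>
      le_antisymm (hgb ▸ hgmono x b hx hxb) (hgnn x hx)
    rcases le_or_gt b v with hbv | hvb
    · -- b ≤ v ≤ u
      have h1 := hβsub u v b hb hbv hvu
      have h2 := hyp v u hbv hvu
      linarith
    · -- v < b
      have hgv : g v = 0 := gzero v hv hvb.le
      rcases le_or_gt u b with hub | hbu
      · have hgu : g u = 0 := gzero u (hv.trans hvu) hub
        have := hβnn u v hv hvu
        linarith
      · have h1 := hyp b u le_rfl hbu.le
        have h2 := hβdiag b hb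
        have h3 := hβdec u b v hv hvb.le hbu.le
        linarith
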